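/- Let g be a Lie algebra generated by X_{ir}^± (i ∈ I, r ≥ 0) satisfying [X_{i,r+1}^±, X_{js}^±] = [X_{ir}^±, X_{j,s+1}^±] for all i,j ∈ I and r,s ≥ 0. Then for any n ≥ 1, any i, j ∈ I, any s ≥ 0, and any k_1,…,k_n ≥ 0 with k_1 + ⋯ + k_n = k: [X_{ik}^±, ad(X_{i0}^±)^{n-1}(X_{js}^±)] = [X_{i,k_1}^±, [X_{i,k_2}^±, …, [X_{i,k_n}^±, X_{js}^±]⋯]]. -/
import Mathlib

section Aux

variable {L : Type*} [LieRing L] [LieAlgebra ℂ L] {I : Type*}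

private lemma shiftsum (X : Bool → I → ℕ → L)
    (hshift : ∀ (ε : Bool) (i j : I) (r s : ℕ),
      ⁅X ε i (r + 1), X ε j s⁆ = ⁅X ε i r, X ε j (s + 1)⁆)
    (ε : Bool) (i : I) : ∀ p q, ⁅X ε i p, X ε i q⁆ = ⁅X ε i 0, X ε i (p + q)⁆ := by
  intro p
  induction p with
  | zero => intro q; rw [Nat.zero_add]
  | succ p ih =>
    intro q
    rw [hshift, ih]
    congr 2
    omega

private lemma brzero (X : Bool → I → ℕ → L)
    (hshift : ∀ (ε : Bool) (i j : I) (r s : ℕ),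
      ⁅X ε i (r + 1), X ε j s⁆ = ⁅X ε i r, X ε j (s + 1)⁆)
    (ε : Bool) (i : I) (p q : ℕ) : ⁅X ε i p, X ε i q⁆ = (0 : L) := by
  have h1 := shiftsum X hshift ε i p q
  have h2 := shiftsum X hshift ε i q p
  rw [Nat.add_comm q p] at h2
  have h3 : ⁅X ε i 0, X ε i (p + q)⁆ = -⁅X ε i 0, X ε i (p + q)⁆ := by
    conv_lhs => rw [← h2]
    rw [← lie_skew, h1]
  have h4 : (2 : ℂ) • ⁅X ε i 0, X ε i (p + q)⁆ = 0 := by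
    rw [two_smul, eq_neg_iff_add_eq_zero.mp h3]
  rcases smul_eq_zero.mp h4 with h | h
  · exact absurd h two_ne_zero
  · rw [h1, h]

private lemma sh0 (X : Bool → I → ℕ → L)
    (hshift : ∀ (ε : Bool) (i j : I) (r s : ℕ),
      ⁅X ε i (r + 1), X ε j s⁆ = ⁅X ε i r, X ε j (s + 1)⁆)
    (ε : Bool) (i j : I) :
    ∀ (m r s : ℕ),
      ⁅X ε i (r + 1), (fun y => ⁅X ε i 0, y⁆)^[m] (X ε j s)⁆
        = ⁅X ε i r, (fun y => ⁅X ε i 0, y⁆)^[m] (X ε j (s + 1))⁆ := by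
  intro m
  induction m with
  | zero => intro r s; exact hshift ε i j r s
  | succ m ih =>
    intro r s
    rw [Function.iterate_succ_apply', Function.iterate_succ_apply']
    rw [leibniz_lie, brzero X hshift ε i, zero_lie, zero_add, ih]
    conv_rhs => rw [leibniz_lie, brzero X hshift ε i, zero_lie, zero_add]

private lemma sh0' (X : Bool → I → ℕ → L)
    (hshift : ∀ (ε : Bool) (i j : I) (r s : ℕ),
      ⁅X ε i (r + 1), X ε j s⁆ = ⁅X ε i r, X ε j (s + 1)⁆)
    (ε : Bool) (i j : I) :
    ∀ (k m r s : ℕ),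
      ⁅X ε i (r + k), (fun y => ⁅X ε i 0, y⁆)^[m] (X ε j s)⁆
        = ⁅X ε i r, (fun y => ⁅X ε i 0, y⁆)^[m] (X ε j (s + k))⁆ := by
  intro k
  induction k with
  | zero => intro m r s; rfl
  | succ k ih =>
    intro m r s
    have h : r + (k + 1) = (r + k) + 1 := by omega
    rw [h, sh0 X hshift ε i j m (r + k) s, ih]
    have h2 : s + 1 + k = s + (k + 1) := by omega
    rw [h2]

private lemma auxmain (X : Bool → I → ℕ → L)
    (hshift : ∀ (ε : Bool) (i j : I) (r s : ℕ),
      ⁅X ε i (r + 1), X ε j s⁆ = ⁅X ε i r, X ε j (s + 1)⁆)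
    (ε : Bool) (i j : I) :
    ∀ (ks : List ℕ) (k₁ s : ℕ),
      ⁅X ε i (k₁ + ks.sum), (fun y => ⁅X ε i 0, y⁆)^[ks.length] (X ε j s)⁆
        = (k₁ :: ks).foldr (fun k acc => ⁅X ε i k, acc⁆) (X ε j s) := by
  intro ks
  induction ks with
  | nil =>
    intro k₁ s
    simp
  | cons k₂ ks ih =>
    intro k₁ s
    have hc : ⁅X ε i k₂, (fun y => ⁅X ε i 0, y⁆)^[ks.length] (X ε j s)⁆
        = (fun y => ⁅X ε i 0, y⁆)^[ks.length + 1] (X ε j (s + k₂)) := by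
      have := sh0' X hshift ε i j k₂ ks.length 0 s
      rw [Nat.zero_add] at this
      rw [this, Function.iterate_succ_apply']
    have key : ⁅X ε i (k₁ + (k₂ :: ks).sum),
        (fun y => ⁅X ε i 0, y⁆)^[(k₂ :: ks).length] (X ε j s)⁆
        = ⁅X ε i k₁, ⁅X ε i (k₂ + ks.sum),
            (fun y => ⁅X ε i 0, y⁆)^[ks.length] (X ε j s)⁆⁆ := by
      have hc2 : ⁅X ε i (k₂ + ks.sum), (fun y => ⁅X ε i 0, y⁆)^[ks.length] (X ε j s)⁆
          = (fun y => ⁅X ε i 0, y⁆)^[ks.length + 1] (X ε j (s + (k₂ + ks.sum))) := by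
        have := sh0' X hshift ε i j (k₂ + ks.sum) ks.length 0 s
        rw [Nat.zero_add] at this
        rw [this, Function.iterate_succ_apply']
      rw [hc2]
      have := sh0' X hshift ε i j (k₂ + ks.sum) (ks.length + 1) k₁ s
      rw [List.sum_cons, List.length_cons, ← this]
    rw [key, ih k₂ s]
    simp only [List.foldr_cons]
  
end Aux

/-- In a Lie algebra with elements `X_{ir}^±` satisfying the degree-shift
relation `[X_{i,r+1}^±, X_{js}^±] = [X_{ir}^±, X_{j,s+1}^±]`, for any `n ≥ 1`, any
`i, j`, any `s ≥ 0` and any `k_1, …, k_n ≥ 0` with `k_1 + ⋯ + k_n = k`: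
`[X_{ik}^±, ad(X_{i0}^±)^{n-1}(X_{js}^±)] = [X_{i,k_1}^±, [X_{i,k_2}^±, …, [X_{i,k_n}^±, X_{js}^±]⋯]]`.
The list `ks = [k_1, …, k_n]` encodes the degrees; `ad(x)^{m}` is the `m`-fold iterate
of `y ↦ ⁅x, y⁆`; the sign `±` is encoded by `ε : Bool`. -/
theorem stmt7 {L : Type*} [LieRing L] [LieAlgebra ℂ L] {I : Type*}
    (X : Bool → I → ℕ → L)
    (hshift : ∀ (ε : Bool) (i j : I) (r s : ℕ),
      ⁅X ε i (r + 1), X ε j s⁆ = ⁅X ε i r, X ε j (s + 1)⁆) :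
    ∀ (ε : Bool) (i j : I) (s : ℕ) (n : ℕ), 1 ≤ n →
      ∀ ks : List ℕ, ks.length = n →
        ⁅X ε i ks.sum, (fun y => ⁅X ε i 0, y⁆)^[n - 1] (X ε j s)⁆
          = ks.foldr (fun k acc => ⁅X ε i k, acc⁆) (X ε j s) := by
  intro ε i j s n hn ks hlen
  cases ks with
  | nil => simp at hlen; omega
  | cons k₁ ks =>
    subst hlen
    simp only [List.length_cons, Nat.add_sub_cancel, List.sum_cons]
    exact auxmain X hshift ε i j ks k₁ s
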